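/- Let E be a finite-dimensional vector space over ℚ, let Δ be a finite subset of E with 0 ∉ Δ and Δ ∩ (−Δ) = ∅, set ρ₁ = (1/2)·Σ_{α∈Δ} α, and work in the group algebra ℤ[E] with basis elements e^μ for μ ∈ E. For a subset Z ⊆ Δ define integers K_Z(γ) for γ ∈ E by the expansion ∏_{α∈Δ∖Z} (1 + e^{−α}) = Σ_{γ∈E} K_Z(γ) e^{−γ}. Let w be a linear automorphism of E with w(Δ ∪ (−Δ)) = Δ ∪ (−Δ), let Z ⊆ Δ be such that w(Z) ⊆ Δ, and set w ∗ γ = ρ₁ − w(ρ₁ − γ). Then Σ_{γ∈E} K_Z(γ) e^{−(w ∗ γ)} = Σ_{γ∈E} K_{wZ}(γ) e^{−γ} in ℤ[E]. -/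

import Mathlib

open scoped BigOperators

set_option linter.unusedSectionVars false

lemma prod_single_one' {E : Type*} [AddCommGroup E] {ι : Type*} (s : Finset ι) (g : ι → E) :
    (∏ i ∈ s, AddMonoidAlgebra.single (g i) (1 : ℤ)) =
      AddMonoidAlgebra.single (∑ i ∈ s, g i) 1 := by
  classical
  induction s using Finset.induction with
  | empty => simp [AddMonoidAlgebra.one_def]
  | insert _ _ h ih =>
    rw [Finset.prod_insert h, Finset.sum_insert h, ih, AddMonoidAlgebra.single_mul_single,
      one_mul]

theorem sum_K_exp_neg_star_eq
    {E : Type*} [AddCommGroup E] [Module ℚ E] [FiniteDimensional ℚ E] [DecidableEq E]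
    (Δ : Finset E) (hΔ0 : (0 : E) ∉ Δ) (hΔ : (↑Δ : Set E) ∩ (-(↑Δ : Set E)) = ∅)
    (ρ₁ : E) (hρ₁ : ρ₁ = (1 / 2 : ℚ) • ∑ α ∈ Δ, α)
    (w : E ≃ₗ[ℚ] E)
    (hw : w '' ((↑Δ : Set E) ∪ (-(↑Δ : Set E))) = (↑Δ : Set E) ∪ (-(↑Δ : Set E)))
    (Z : Finset E) (hZ : Z ⊆ Δ) (hwZ : Z.image w ⊆ Δ)
    (KZ KwZ : E →₀ ℤ)
    (hKZ : (∏ α ∈ Δ \ Z, (1 + AddMonoidAlgebra.single (-α) (1 : ℤ))) =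
      KZ.sum fun γ c => AddMonoidAlgebra.single (-γ) c)
    (hKwZ : (∏ α ∈ Δ \ Z.image w, (1 + AddMonoidAlgebra.single (-α) (1 : ℤ))) =
      KwZ.sum fun γ c => AddMonoidAlgebra.single (-γ) c) :
    (KZ.sum fun γ c => AddMonoidAlgebra.single (-(ρ₁ - w (ρ₁ - γ))) c) =
      KwZ.sum fun γ c => AddMonoidAlgebra.single (-γ) c := by
  classical
  -- basic incompatibility of Δ and -Δ
  have hΔ' : ∀ x : E, x ∈ Δ → -x ∈ Δ → False := by
    intro x hx hnx
    have : x ∈ (↑Δ : Set E) ∩ (-(↑Δ : Set E)) := ⟨hx, by simpa [Set.mem_neg] using hnx⟩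
    simp [hΔ] at this
  have hwinj : Function.Injective w := w.injective
  -- image facts
  have hw1 : ∀ x : E, (x ∈ Δ ∨ -x ∈ Δ) → (w x ∈ Δ ∨ -(w x) ∈ Δ) := by
    intro x hx
    have hxS : x ∈ (↑Δ : Set E) ∪ (-(↑Δ : Set E)) := by
      rcases hx with h | h
      · exact Or.inl h
      · exact Or.inr (by simpa [Set.mem_neg] using h)
    have : w x ∈ (↑Δ : Set E) ∪ (-(↑Δ : Set E)) := by
      rw [← hw]; exact ⟨x, hxS, rfl⟩
    rcases this with h | h
    · exact Or.inl h
    · exact Or.inr (by simpa [Set.mem_neg] using h)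
  have hw2 : ∀ y : E, (y ∈ Δ ∨ -y ∈ Δ) → (w.symm y ∈ Δ ∨ -(w.symm y) ∈ Δ) := by
    intro y hy
    have hyS : y ∈ (↑Δ : Set E) ∪ (-(↑Δ : Set E)) := by
      rcases hy with h | h
      · exact Or.inl h
      · exact Or.inr (by simpa [Set.mem_neg] using h)
    rw [← hw] at hyS
    rcases hyS with ⟨x, hxS, hxy⟩
    have : w.symm y = x := by rw [← hxy]; exact w.symm_apply_apply x
    rw [this]
    rcases hxS with h | h
    · exact Or.inl h
    · exact Or.inr (by simpa [Set.mem_neg] using h)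
  -- finsets
  set A : Finset E := (Δ \ Z).image w with hA
  set P : Finset E := A ∩ Δ with hP
  set N : Finset E := A \ Δ with hN
  set N' : Finset E := N.image (fun x => -x) with hN'
  have hmemA : ∀ β, β ∈ A ↔ ∃ δ ∈ Δ \ Z, w δ = β := by
    intro β; simp [hA]
  have hNneg : ∀ β ∈ N, -β ∈ Δ := by
    intro β hβ
    rw [hN, Finset.mem_sdiff] at hβ
    obtain ⟨hβA, hβΔ⟩ := hβ
    rcases (hmemA β).1 hβA with ⟨δ, hδ, rfl⟩
    rcases hw1 δ (Or.inl (Finset.mem_sdiff.1 hδ).1) with h | h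
    · exact absurd h hβΔ
    · exact h
  -- union and disjointness
  have hdisj : Disjoint P N' := by
    rw [Finset.disjoint_left]
    intro α hαP hαN'
    rw [hP, Finset.mem_inter] at hαP
    rw [hN', Finset.mem_image] at hαN'
    rcases hαN' with ⟨β, hβ, rfl⟩
    rw [hN, Finset.mem_sdiff] at hβ
    rcases (hmemA _).1 hαP.1 with ⟨δ₁, hδ₁, h1⟩
    rcases (hmemA _).1 hβ.1 with ⟨δ₂, hδ₂, h2⟩
    have : δ₁ = -δ₂ := by
      apply hwinj
      rw [h1, ← h2]
      exact (map_neg w δ₂).symm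
    exact hΔ' δ₂ (Finset.mem_sdiff.1 hδ₂).1
      (by rw [← this]; exact (Finset.mem_sdiff.1 hδ₁).1)
  have hunion : P ∪ N' = Δ \ Z.image w := by
    ext α
    constructor
    · intro hα
      rcases Finset.mem_union.1 hα with hα | hα
      · rw [hP, Finset.mem_inter] at hα
        rcases (hmemA _).1 hα.1 with ⟨δ, hδ, rfl⟩
        rw [Finset.mem_sdiff] at hδ
        rw [Finset.mem_sdiff]
        refine ⟨hα.2, ?_⟩
        intro hc
        rw [Finset.mem_image] at hc
        rcases hc with ⟨z, hz, hzw⟩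
        exact hδ.2 (by rwa [hwinj hzw] at hz)
      · rw [hN', Finset.mem_image] at hα
        rcases hα with ⟨β, hβ, rfl⟩
        have hβΔ := hNneg β hβ
        rw [hN, Finset.mem_sdiff] at hβ
        rcases (hmemA _).1 hβ.1 with ⟨δ, hδ, rfl⟩
        rw [Finset.mem_sdiff]
        refine ⟨hβΔ, ?_⟩
        intro hc
        rw [Finset.mem_image] at hc
        rcases hc with ⟨z, hz, hzw⟩
        have : δ = -z := by
          apply hwinj
          rw [map_neg w z, hzw, neg_neg]
        exact hΔ' z (hZ hz) (by rw [← this]; exact (Finset.mem_sdiff.1 hδ).1)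
    · intro hα
      rw [Finset.mem_sdiff] at hα
      obtain ⟨hαΔ, hαwZ⟩ := hα
      rcases hw2 α (Or.inl hαΔ) with h | h
      · -- w.symm α ∈ Δ, show α ∈ P
        apply Finset.mem_union_left
        rw [hP, Finset.mem_inter]
        refine ⟨(hmemA α).2 ⟨w.symm α, ?_, w.apply_symm_apply α⟩, hαΔ⟩
        rw [Finset.mem_sdiff]
        refine ⟨h, fun hc => hαwZ ?_⟩
        rw [Finset.mem_image]
        exact ⟨w.symm α, hc, w.apply_symm_apply α⟩
      · -- -(w.symm α) ∈ Δ, show α ∈ N'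
        apply Finset.mem_union_right
        have hnz : -(w.symm α) ∉ Z := by
          intro hc
          apply hΔ' α hαΔ
          have : -α = w (-(w.symm α)) := by rw [map_neg w, w.apply_symm_apply]
          rw [this]
          exact hwZ (Finset.mem_image.2 ⟨_, hc, rfl⟩)
        have hmA : -α ∈ A := by
          refine (hmemA _).2 ⟨-(w.symm α), Finset.mem_sdiff.2 ⟨h, hnz⟩, ?_⟩
          rw [map_neg w, w.apply_symm_apply]
        have hmN : -α ∈ N := by
          rw [hN, Finset.mem_sdiff]
          exact ⟨hmA, fun hc => hΔ' α hαΔ hc⟩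
        rw [hN', Finset.mem_image]
        exact ⟨-α, hmN, neg_neg α⟩
  -- the sum identity
  have hsumN : ∑ β ∈ N, β = w ρ₁ - ρ₁ := by
    have s1 : ∑ β ∈ A, β = w (∑ α ∈ Δ \ Z, α) := by
      rw [hA, Finset.sum_image (fun a _ b _ h => hwinj h), map_sum]
    have s2 : ∑ β ∈ A, β = ∑ β ∈ P, β + ∑ β ∈ N, β := by
      rw [hP, hN, Finset.sum_inter_add_sum_sdiff]
    have s4 : ∑ β ∈ N', β = -∑ β ∈ N, β := by
      rw [hN', Finset.sum_image (fun a _ b _ h => neg_injective h), ← Finset.sum_neg_distrib]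
    have s3 : ∑ α ∈ Δ \ Z.image w, α = ∑ β ∈ P, β - ∑ β ∈ N, β := by
      rw [← hunion, Finset.sum_union hdisj, s4]; abel
    have s5 : ∑ α ∈ Δ \ Z, α = ∑ α ∈ Δ, α - ∑ α ∈ Z, α := Finset.sum_sdiff_eq_sub hZ
    have s6 : ∑ α ∈ Δ \ Z.image w, α = ∑ α ∈ Δ, α - w (∑ α ∈ Z, α) := by
      rw [Finset.sum_sdiff_eq_sub hwZ, Finset.sum_image (fun a _ b _ h => hwinj h), map_sum]
    have key : (2 : ℚ) • (∑ β ∈ N, β) = w (∑ α ∈ Δ, α) - ∑ α ∈ Δ, α := by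
      have h1 : w (∑ α ∈ Δ, α) - w (∑ α ∈ Z, α) = ∑ β ∈ P, β + ∑ β ∈ N, β := by
        rw [← map_sub, ← s5, ← s1, s2]
      have h2 : ∑ α ∈ Δ, α - w (∑ α ∈ Z, α) = ∑ β ∈ P, β - ∑ β ∈ N, β := by
        rw [← s6, s3]
      rw [two_smul]
      calc (∑ β ∈ N, β) + ∑ β ∈ N, β
          = (∑ β ∈ P, β + ∑ β ∈ N, β) - (∑ β ∈ P, β - ∑ β ∈ N, β) := by abel
        _ = (w (∑ α ∈ Δ, α) - w (∑ α ∈ Z, α)) - (∑ α ∈ Δ, α - w (∑ α ∈ Z, α)) := by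
            rw [← h1, ← h2]
        _ = w (∑ α ∈ Δ, α) - ∑ α ∈ Δ, α := by abel
    have : (∑ β ∈ N, β) = (1/2 : ℚ) • ((2 : ℚ) • (∑ β ∈ N, β)) := by
      rw [smul_smul]; norm_num
    rw [this, key, hρ₁, map_smul, ← smul_sub]
  -- algebraic part
  set W : AddMonoidAlgebra ℤ E ≃ₐ[ℤ] AddMonoidAlgebra ℤ E :=
    AddMonoidAlgebra.domCongr ℤ ℤ w.toAddEquiv with hW
  have hWsingle : ∀ (a : E) (c : ℤ),
      W (AddMonoidAlgebra.single a c) = AddMonoidAlgebra.single (w a) c := by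
    intro a c
    rw [hW, AddMonoidAlgebra.domCongr_single]
    rfl
  have main : (KZ.sum fun γ c => AddMonoidAlgebra.single (-(ρ₁ - w (ρ₁ - γ))) c)
      = AddMonoidAlgebra.single (w ρ₁ - ρ₁) 1 *
        ∏ α ∈ Δ \ Z, (1 + AddMonoidAlgebra.single (-(w α)) (1 : ℤ)) := by
    calc (KZ.sum fun γ c => AddMonoidAlgebra.single (-(ρ₁ - w (ρ₁ - γ))) c)
        = KZ.sum fun γ c =>
            AddMonoidAlgebra.single (w ρ₁ - ρ₁) 1 * AddMonoidAlgebra.single (-(w γ)) c := by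
          apply Finsupp.sum_congr
          intro γ _
          rw [AddMonoidAlgebra.single_mul_single, one_mul]
          congr 1
          rw [map_sub]
          abel
      _ = AddMonoidAlgebra.single (w ρ₁ - ρ₁) 1 *
            KZ.sum fun γ c => AddMonoidAlgebra.single (-(w γ)) c := by
          rw [Finsupp.mul_sum]
      _ = AddMonoidAlgebra.single (w ρ₁ - ρ₁) 1 *
            W (KZ.sum fun γ c => AddMonoidAlgebra.single (-γ) c) := by
          congr 1
          rw [Finsupp.sum, Finsupp.sum, map_sum]
          apply Finset.sum_congr rfl
          intro γ _
          rw [hWsingle, map_neg]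
      _ = AddMonoidAlgebra.single (w ρ₁ - ρ₁) 1 *
            ∏ α ∈ Δ \ Z, (1 + AddMonoidAlgebra.single (-(w α)) (1 : ℤ)) := by
          rw [← hKZ, map_prod]
          congr 1
          apply Finset.prod_congr rfl
          intro α _
          rw [map_add, map_one, hWsingle, map_neg]
  have prodN : (∏ β ∈ N, (1 + AddMonoidAlgebra.single (-β) (1 : ℤ)))
      = AddMonoidAlgebra.single (-(∑ β ∈ N, β)) 1 *
        ∏ β ∈ N', (1 + AddMonoidAlgebra.single (-β) (1 : ℤ)) := by
    calc (∏ β ∈ N, (1 + AddMonoidAlgebra.single (-β) (1 : ℤ)))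
        = ∏ β ∈ N, (AddMonoidAlgebra.single (-β) (1 : ℤ) *
            (1 + AddMonoidAlgebra.single β (1 : ℤ))) := by
          apply Finset.prod_congr rfl
          intro β _
          rw [mul_add, mul_one, AddMonoidAlgebra.single_mul_single, neg_add_cancel, mul_one,
            add_comm]
          rw [AddMonoidAlgebra.one_def]
      _ = (∏ β ∈ N, AddMonoidAlgebra.single (-β) (1 : ℤ)) *
            ∏ β ∈ N, (1 + AddMonoidAlgebra.single β (1 : ℤ)) := Finset.prod_mul_distrib
      _ = AddMonoidAlgebra.single (-(∑ β ∈ N, β)) 1 *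
            ∏ β ∈ N', (1 + AddMonoidAlgebra.single (-β) (1 : ℤ)) := by
          rw [prod_single_one', ← Finset.sum_neg_distrib, hN',
            Finset.prod_image (fun a _ b _ h => neg_injective h)]
          simp only [neg_neg]
  calc (KZ.sum fun γ c => AddMonoidAlgebra.single (-(ρ₁ - w (ρ₁ - γ))) c)
      = AddMonoidAlgebra.single (w ρ₁ - ρ₁) 1 *
          ∏ α ∈ Δ \ Z, (1 + AddMonoidAlgebra.single (-(w α)) (1 : ℤ)) := main
    _ = AddMonoidAlgebra.single (w ρ₁ - ρ₁) 1 *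
          ∏ β ∈ A, (1 + AddMonoidAlgebra.single (-β) (1 : ℤ)) := by
        rw [hA, Finset.prod_image (fun a _ b _ h => hwinj h)]
    _ = AddMonoidAlgebra.single (w ρ₁ - ρ₁) 1 *
          ((∏ β ∈ P, (1 + AddMonoidAlgebra.single (-β) (1 : ℤ))) *
            ∏ β ∈ N, (1 + AddMonoidAlgebra.single (-β) (1 : ℤ))) := by
        rw [← Finset.prod_inter_mul_prod_diff A Δ, ← hP, ← hN]
    _ = (AddMonoidAlgebra.single (w ρ₁ - ρ₁) 1 *
          AddMonoidAlgebra.single (-(∑ β ∈ N, β)) 1) *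
          ((∏ β ∈ P, (1 + AddMonoidAlgebra.single (-β) (1 : ℤ))) *
            ∏ β ∈ N', (1 + AddMonoidAlgebra.single (-β) (1 : ℤ))) := by
        rw [prodN]; ring
    _ = (∏ β ∈ P, (1 + AddMonoidAlgebra.single (-β) (1 : ℤ))) *
          ∏ β ∈ N', (1 + AddMonoidAlgebra.single (-β) (1 : ℤ)) := by
        rw [hsumN, AddMonoidAlgebra.single_mul_single, add_neg_cancel, mul_one,
          ← AddMonoidAlgebra.one_def, one_mul]
    _ = ∏ β ∈ P ∪ N', (1 + AddMonoidAlgebra.single (-β) (1 : ℤ)) :=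
        (Finset.prod_union hdisj).symm
    _ = ∏ α ∈ Δ \ Z.image w, (1 + AddMonoidAlgebra.single (-α) (1 : ℤ)) := by rw [hunion]
    _ = KwZ.sum fun γ c => AddMonoidAlgebra.single (-γ) c := hKwZ
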